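/- Let ψ be a complex-valued Schwartz function on ℝ and define the Wigner–Ville function W(x,p) := (2π)^(-1/2) ∫ conj(ψ(x + y/2)) * ψ(x - y/2) * Complex.exp(I * p * y) dy. Then for all s, t ∈ ℝ, the Fourier transform of W equals the α = 0 hashed expression of the canonical pair: (2π)^(-1) ∫ ( ∫ Complex.exp(-I * (s*p + t*x)) * W(x,p) dx ) dp = (2π)^(-1/2) ∫ Complex.exp(-I * t * x) * conj(ψ(x + s/2)) * ψ(x - s/2) dx, where the left-hand side is the iterated integral taken first in x and then in p, and all the integrals involved are absolutely convergent. The right-hand side is the inner product ⟨e^{isp̂/2}ψ, e^{-itx̂} e^{-isp̂/2}ψ⟩, since e^{-iap̂} acts by translation, (e^{-iap̂}ψ)(x) = ψ(x - a), and e^{-itx̂} by multiplication with e^{-itx}. -/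

import Mathlib

open MeasureTheory

/-- The (normalised) Wigner–Ville function of a Schwartz function `ψ`:
`WV ψ x p = (2π)^(-1/2) ∫ conj (ψ (x + y/2)) * ψ (x - y/2) * exp (i p y) dy`. -/
noncomputable def WV (ψ : SchwartzMap ℝ ℂ) (x p : ℝ) : ℂ :=
  (((2 * Real.pi) ^ (-(1 / 2) : ℝ) : ℝ) : ℂ) *
    ∫ y : ℝ, (starRingEnd ℂ) (ψ (x + y / 2)) * ψ (x - y / 2) *
      Complex.exp (Complex.I * (p : ℂ) * (y : ℂ))

namespace WVAux

open Real FourierTransform SchwartzMap Complex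

@[fun_prop]
theorem conj_cont {α} [TopologicalSpace α] {f : α → ℂ} (hf : Continuous f) :
    Continuous fun x => (starRingEnd ℂ) (f x) := Complex.continuous_conj.comp hf

/-- The unimodular phase `e r = exp(i r)`. -/
noncomputable def ec (r : ℝ) : ℂ := Complex.exp (Complex.I * r)

lemma ec_norm (r : ℝ) : ‖ec r‖ = 1 := by
  simp [ec, Complex.norm_exp]

lemma ec_add (a b : ℝ) : ec (a + b) = ec a * ec b := by
  rw [ec, ec, ec, ← Complex.exp_add]
  congr 1
  push_cast
  ring

lemma ec_apply (r : ℝ) : ec r = Complex.exp (Complex.I * r) := rfl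

lemma ec_conj (r : ℝ) : (starRingEnd ℂ) (ec r) = ec (-r) := by
  rw [ec_apply, ec_apply, ← Complex.exp_conj]
  congr 1
  simp only [map_mul, Complex.conj_I, Complex.conj_ofReal, Complex.ofReal_neg]
  ring

@[fun_prop]
lemma ec_continuous : Continuous ec :=
  Complex.continuous_exp.comp (continuous_const.mul Complex.continuous_ofReal)

lemma ec_neg_ofReal (r : ℝ) : Complex.exp (-Complex.I * (r : ℂ)) = ec (-r) := by
  rw [ec_apply]; congr 1; push_cast; ring

lemma norm_aux (r : ℝ) (a b : ℂ) : ‖ec r * ((starRingEnd ℂ) a * b)‖ = ‖a‖ * ‖b‖ := by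
  rw [norm_mul, ec_norm, one_mul, norm_mul, RCLike.norm_conj]

variable (ψ : SchwartzMap ℝ ℂ) (s t : ℝ)

noncomputable def Cψ : ℝ := SchwartzMap.seminorm ℝ 0 0 ψ

lemma norm_le_Cψ (x : ℝ) : ‖ψ x‖ ≤ Cψ ψ := norm_le_seminorm ℝ ψ x

lemma Cψ_nonneg : 0 ≤ Cψ ψ := le_trans (norm_nonneg _) (norm_le_Cψ ψ 0)

/- Measure preserving maps on ℝ². -/

lemma mpSwap : MeasurePreserving (Prod.swap : ℝ × ℝ → ℝ × ℝ) volume volume := by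
  rw [Measure.volume_eq_prod]
  exact Measure.measurePreserving_swap

lemma mpR : MeasurePreserving (fun z : ℝ × ℝ => (z.1, z.1 - z.2)) volume volume := by
  rw [Measure.volume_eq_prod]
  exact (MeasurePreserving.id volume).skew_product
    (measurable_fst.sub measurable_snd)
    (Filter.Eventually.of_forall fun x => Measure.map_sub_left_eq_self volume x)

lemma mpM : MeasurePreserving (fun z : ℝ × ℝ => (z.2, z.2 - z.1)) volume volume :=
  (mpR).comp (mpSwap)

lemma mpS : MeasurePreserving (fun z : ℝ × ℝ => (z.1 + z.2 / 2, z.2)) volume volume := by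
  have h1 : MeasurePreserving (fun z : ℝ × ℝ => (z.1, z.2 + z.1 / 2)) volume volume := by
    rw [Measure.volume_eq_prod]
    exact (MeasurePreserving.id volume).skew_product (g := fun a c => c + a / 2)
      (measurable_snd.add (measurable_fst.div_const 2))
      (Filter.Eventually.of_forall fun x => map_add_right_eq_self volume (x / 2))
  exact (mpSwap).comp (h1.comp (mpSwap))

lemma mpT : MeasurePreserving (fun z : ℝ × ℝ => (z.1 + z.2 / 2, z.1 - z.2 / 2)) volume volume := by
  have h := (mpR).comp (mpS)
  have : ((fun z : ℝ × ℝ => (z.1, z.1 - z.2)) ∘ fun z : ℝ × ℝ => (z.1 + z.2 / 2, z.2))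
      = fun z : ℝ × ℝ => (z.1 + z.2 / 2, z.1 - z.2 / 2) := by
    funext z
    dsimp [Function.comp]
    rw [Prod.mk.injEq]
    exact ⟨rfl, by ring⟩
  rwa [this] at h

lemma int_pm : Integrable (fun z : ℝ × ℝ => ‖ψ z.1‖ * ‖ψ z.2‖) := by
  rw [Measure.volume_eq_prod]
  exact ψ.integrable.norm.mul_prod ψ.integrable.norm

lemma int_T : Integrable (fun z : ℝ × ℝ => ‖ψ (z.1 + z.2 / 2)‖ * ‖ψ (z.1 - z.2 / 2)‖) :=
  ((mpT).integrable_comp (int_pm ψ).aestronglyMeasurable).2 (int_pm ψ)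

lemma int_M : Integrable (fun z : ℝ × ℝ => ‖ψ z.2‖ * ‖ψ (z.2 - z.1)‖) :=
  ((mpM).integrable_comp (int_pm ψ).aestronglyMeasurable).2 (int_pm ψ)

/-- Master integrability lemma for integrands bounded by the "Wigner" product. -/
lemma masterT {f : ℝ × ℝ → ℂ} (hf : AEStronglyMeasurable f volume) (C : ℝ)
    (hb : ∀ z : ℝ × ℝ, ‖f z‖ ≤ C * (‖ψ (z.1 + z.2 / 2)‖ * ‖ψ (z.1 - z.2 / 2)‖)) :
    Integrable f :=
  (((int_T ψ)).const_mul C).mono' hf (Filter.Eventually.of_forall hb)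

lemma masterM {f : ℝ × ℝ → ℂ} (hf : AEStronglyMeasurable f volume)
    (hb : ∀ z : ℝ × ℝ, ‖f z‖ ≤ ‖ψ z.2‖ * ‖ψ (z.2 - z.1)‖) :
    Integrable f :=
  ((int_M ψ)).mono' hf (Filter.Eventually.of_forall hb)

/- The three main auxiliary functions. -/

noncomputable def G (y : ℝ) : ℂ :=
  ∫ x : ℝ, ec (-(t * x)) * ((starRingEnd ℂ) (ψ (x + y / 2)) * ψ (x - y / 2))

noncomputable def A (q : ℝ) : ℂ := ∫ v : ℝ, ψ v * ec (-(q * v))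

noncomputable def Fp (p : ℝ) : ℂ := ∫ y : ℝ, G ψ t y * ec (p * y)

lemma G_alt (y : ℝ) :
    G ψ t y = ∫ u : ℝ, ec (-(t * (u - y / 2))) * ((starRingEnd ℂ) (ψ u) * ψ (u - y)) := by
  rw [G, ← integral_add_right_eq_self
    (fun u => ec (-(t * (u - y / 2))) * ((starRingEnd ℂ) (ψ u) * ψ (u - y))) (y / 2)]
  congr 1
  funext x
  have h1 : x + y / 2 - y / 2 = x := by ring
  have h2 : x + y / 2 - y = x - y / 2 := by ring
  rw [h1, h2]

lemma G_cont : Continuous (G ψ t) := by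
  have hG : G ψ t = fun y : ℝ =>
      ∫ u : ℝ, ec (-(t * (u - y / 2))) * ((starRingEnd ℂ) (ψ u) * ψ (u - y)) :=
    funext fun y => G_alt ψ t y
  rw [hG]
  apply continuous_of_dominated (bound := fun u : ℝ => ‖ψ u‖ * Cψ ψ)
  · intro y
    apply Continuous.aestronglyMeasurable
    fun_prop
  · intro y
    refine Filter.Eventually.of_forall fun u => ?_
    rw [norm_aux]
    exact mul_le_mul_of_nonneg_left (norm_le_Cψ ψ _) (norm_nonneg _)
  · exact ψ.integrable.norm.mul_const _
  · refine Filter.Eventually.of_forall fun u => ?_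
    fun_prop

lemma G_integrable : Integrable (G ψ t) := by
  have hP : Integrable (fun z : ℝ × ℝ => ‖ψ z.2‖ * ‖ψ (z.2 - z.1)‖)
      ((volume : Measure ℝ).prod volume) := by
    rw [← Measure.volume_eq_prod]; exact int_M ψ
  have hQ : Integrable (fun y : ℝ => ∫ u : ℝ, ‖ψ u‖ * ‖ψ (u - y)‖) := hP.integral_prod_left
  refine hQ.mono' (G_cont ψ t).aestronglyMeasurable (Filter.Eventually.of_forall fun y => ?_)
  rw [G_alt]
  calc ‖∫ u : ℝ, ec (-(t * (u - y / 2))) * ((starRingEnd ℂ) (ψ u) * ψ (u - y))‖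
      ≤ ∫ u : ℝ, ‖ec (-(t * (u - y / 2))) * ((starRingEnd ℂ) (ψ u) * ψ (u - y))‖ :=
        norm_integral_le_integral_norm _
    _ = ∫ u : ℝ, ‖ψ u‖ * ‖ψ (u - y)‖ := by
        congr 1; funext u; rw [norm_aux]

lemma A_eq (q : ℝ) : A ψ q = 𝓕 (ψ : ℝ → ℂ) (q / (2 * π)) := by
  rw [A, Real.fourier_real_eq]
  congr 1
  funext v
  rw [Circle.smul_def, Real.fourierChar_apply, mul_comm]
  congr 1
  rw [ec]
  have h : 2 * π * -(v * (q / (2 * π))) = -(q * v) := by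
    field_simp
  rw [h]
  push_cast
  ring_nf

lemma A_fun : A ψ = fun q : ℝ => (fourierTransformCLM ℂ ψ) (q / (2 * π)) := by
  funext q
  rw [A_eq, fourierTransformCLM_apply, SchwartzMap.fourier_coe]

lemma two_pi_ne : (2 * π : ℝ) ≠ 0 := by positivity

lemma A_int : Integrable (A ψ) := by
  rw [A_fun]
  exact (fourierTransformCLM ℂ ψ).integrable.comp_div (two_pi_ne)

lemma A_cont : Continuous (A ψ) := by
  rw [A_fun]
  exact (fourierTransformCLM ℂ ψ).continuous.comp (continuous_id.div_const _)

lemma A_bound (q : ℝ) : ‖A ψ q‖ ≤ Cψ (fourierTransformCLM ℂ ψ) := by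
  rw [A_fun]
  exact norm_le_Cψ _ _

lemma A_conj (r : ℝ) :
    (∫ u : ℝ, (starRingEnd ℂ) (ψ u) * ec (r * u)) = (starRingEnd ℂ) (A ψ r) := by
  rw [A, ← integral_conj]
  congr 1
  funext u
  rw [map_mul, ec_conj, neg_neg]

end WVAux

namespace WVAux

open Real FourierTransform SchwartzMap Complex

variable (ψ : SchwartzMap ℝ ℂ) (s t : ℝ)

/-- The joint integrand for the first Fubini swap. -/
noncomputable def Jf (p : ℝ) : ℝ × ℝ → ℂ := fun z =>
  Complex.exp (-Complex.I * ((s * p + t * z.1 : ℝ) : ℂ)) *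
    ((((2 * Real.pi) ^ (-(1 / 2) : ℝ) : ℝ) : ℂ) *
      ((starRingEnd ℂ) (ψ (z.1 + z.2 / 2)) * ψ (z.1 - z.2 / 2) *
        Complex.exp (Complex.I * (p : ℂ) * (z.2 : ℂ))))

lemma c_nonneg : (0 : ℝ) ≤ (2 * Real.pi) ^ (-(1 / 2) : ℝ) := by positivity

lemma J_int (p : ℝ) : Integrable (Jf ψ s t p) := by
  apply masterT ψ (C := (2 * Real.pi) ^ (-(1 / 2) : ℝ))
  · apply Continuous.aestronglyMeasurable
    apply Continuous.mul
    · fun_prop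
    · apply Continuous.mul continuous_const
      fun_prop
  · intro z
    rw [Jf]
    simp only [norm_mul, Complex.norm_exp]
    simp only [Complex.norm_real]
    have h1 : (-Complex.I * ((s * p + t * z.1 : ℝ) : ℂ)).re = 0 := by simp
    have h2 : (Complex.I * (p : ℂ) * (z.2 : ℂ)).re = 0 := by simp
    rw [h1, h2]
    simp only [Real.exp_zero, one_mul, mul_one, RCLike.norm_conj, Real.norm_eq_abs,
      _root_.abs_of_nonneg c_nonneg]
    exact le_of_eq (by ring)

lemma J_eq1 (p x : ℝ) :
    Complex.exp (-Complex.I * ((s * p + t * x : ℝ) : ℂ)) * WV ψ x p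
      = ∫ y : ℝ, Jf ψ s t p (x, y) := by
  rw [WV, ← integral_const_mul, ← integral_const_mul]
  rfl

lemma bullet1 (p : ℝ) :
    Integrable fun x : ℝ => Complex.exp (-Complex.I * ((s * p + t * x : ℝ) : ℂ)) * WV ψ x p := by
  have h := J_int ψ s t p
  rw [Measure.volume_eq_prod] at h
  have h2 := h.integral_prod_left
  exact h2.congr (Filter.Eventually.of_forall fun x => (J_eq1 ψ s t p x).symm)

lemma inner_x (p y : ℝ) :
    (∫ x : ℝ, Jf ψ s t p (x, y))
      = ((((2 * Real.pi) ^ (-(1 / 2) : ℝ) : ℝ) : ℂ) * ec (-(s * p)) * ec (p * y)) * G ψ t y := by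
  have hpt : ∀ x : ℝ, Jf ψ s t p (x, y)
      = ((((2 * Real.pi) ^ (-(1 / 2) : ℝ) : ℝ) : ℂ) * ec (-(s * p)) * ec (p * y)) *
          (ec (-(t * x)) * ((starRingEnd ℂ) (ψ (x + y / 2)) * ψ (x - y / 2))) := by
    intro x
    rw [Jf]
    have h1 : Complex.exp (-Complex.I * ((s * p + t * x : ℝ) : ℂ))
        = ec (-(s * p)) * ec (-(t * x)) := by
      rw [ec_neg_ofReal, ← ec_add]
      congr 1
      ring
    have h2 : Complex.exp (Complex.I * (p : ℂ) * (y : ℂ)) = ec (p * y) := by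
      rw [ec_apply]; congr 1; push_cast; ring
    rw [h1, h2]
    ring
  calc (∫ x : ℝ, Jf ψ s t p (x, y))
      = ∫ x : ℝ, ((((2 * Real.pi) ^ (-(1 / 2) : ℝ) : ℝ) : ℂ) * ec (-(s * p)) * ec (p * y)) *
          (ec (-(t * x)) * ((starRingEnd ℂ) (ψ (x + y / 2)) * ψ (x - y / 2))) := by
        congr 1; funext x; exact hpt x
    _ = _ := by rw [integral_const_mul]; rfl

lemma stepA (p : ℝ) :
    (∫ x : ℝ, Complex.exp (-Complex.I * ((s * p + t * x : ℝ) : ℂ)) * WV ψ x p)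
      = (((2 * Real.pi) ^ (-(1 / 2) : ℝ) : ℝ) : ℂ) * ec (-(s * p)) * Fp ψ t p := by
  have hswap : (∫ x : ℝ, ∫ y : ℝ, Jf ψ s t p (x, y)) = ∫ y : ℝ, ∫ x : ℝ, Jf ψ s t p (x, y) := by
    apply integral_integral_swap
    have h := J_int ψ s t p
    rw [Measure.volume_eq_prod] at h
    exact h
  calc (∫ x : ℝ, Complex.exp (-Complex.I * ((s * p + t * x : ℝ) : ℂ)) * WV ψ x p)
      = ∫ x : ℝ, ∫ y : ℝ, Jf ψ s t p (x, y) := by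
        congr 1; funext x; exact J_eq1 ψ s t p x
    _ = ∫ y : ℝ, ∫ x : ℝ, Jf ψ s t p (x, y) := hswap
    _ = ∫ y : ℝ, ((((2 * Real.pi) ^ (-(1 / 2) : ℝ) : ℝ) : ℂ) * ec (-(s * p))) *
          (G ψ t y * ec (p * y)) := by
        congr 1; funext y; rw [inner_x]; ring
    _ = _ := by rw [integral_const_mul, Fp]

/-- The joint integrand for the second Fubini swap; `z = (y, u)`. -/
noncomputable def Kf (p : ℝ) : ℝ × ℝ → ℂ := fun z =>
  (ec (-(t * (z.2 - z.1 / 2))) * ((starRingEnd ℂ) (ψ z.2) * ψ (z.2 - z.1))) * ec (p * z.1)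

lemma K_int (p : ℝ) : Integrable (Kf ψ t p) := by
  apply masterM ψ
  · apply Continuous.aestronglyMeasurable
    unfold Kf
    fun_prop
  · intro z
    rw [Kf, norm_mul, ec_norm, mul_one, norm_aux]

lemma inner_y (p u : ℝ) :
    (∫ y : ℝ, Kf ψ t p (y, u))
      = ((starRingEnd ℂ) (ψ u) * ec ((p - t / 2) * u)) * A ψ (p + t / 2) := by
  have hpt : ∀ y : ℝ, Kf ψ t p (y, u)
      = ((starRingEnd ℂ) (ψ u) * ec (-(t * u))) *
          (ψ (u - y) * ec ((p + t / 2) * y)) := by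
    intro y
    rw [Kf]
    have h : ec (-(t * (u - y / 2))) * ec (p * y)
        = ec (-(t * u)) * ec ((p + t / 2) * y) := by
      rw [← ec_add, ← ec_add]
      congr 1
      ring
    calc (ec (-(t * (u - y / 2))) * ((starRingEnd ℂ) (ψ u) * ψ (u - y))) * ec (p * y)
        = (ec (-(t * (u - y / 2))) * ec (p * y)) * ((starRingEnd ℂ) (ψ u) * ψ (u - y)) := by ring
      _ = (ec (-(t * u)) * ec ((p + t / 2) * y)) * ((starRingEnd ℂ) (ψ u) * ψ (u - y)) := by rw [h]
      _ = _ := by ring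
  have hsub : (∫ y : ℝ, ψ (u - y) * ec ((p + t / 2) * y))
      = ec ((p + t / 2) * u) * A ψ (p + t / 2) := by
    have h1 : (∫ y : ℝ, ψ (u - y) * ec ((p + t / 2) * y))
        = ∫ y : ℝ, (fun v : ℝ => ψ v * ec ((p + t / 2) * (u - v))) (u - y) := by
      congr 1; funext y
      simp only []
      congr 2
      ring
    rw [h1, integral_sub_left_eq_self (fun v : ℝ => ψ v * ec ((p + t / 2) * (u - v))) volume u]
    rw [A, ← integral_const_mul]
    congr 1
    funext v
    have h2 : (p + t / 2) * (u - v) = (p + t / 2) * u + -((p + t / 2) * v) := by ring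
    rw [h2, ec_add]
    ring
  calc (∫ y : ℝ, Kf ψ t p (y, u))
      = ∫ y : ℝ, ((starRingEnd ℂ) (ψ u) * ec (-(t * u))) *
          (ψ (u - y) * ec ((p + t / 2) * y)) := by
        congr 1; funext y; exact hpt y
    _ = ((starRingEnd ℂ) (ψ u) * ec (-(t * u))) *
          (ec ((p + t / 2) * u) * A ψ (p + t / 2)) := by rw [integral_const_mul, hsub]
    _ = ((starRingEnd ℂ) (ψ u) * (ec (-(t * u)) * ec ((p + t / 2) * u))) * A ψ (p + t / 2) := by
          ring
    _ = _ := by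
          rw [← ec_add]
          congr 3
          ring

lemma stepC (p : ℝ) : Fp ψ t p = (starRingEnd ℂ) (A ψ (p - t / 2)) * A ψ (p + t / 2) := by
  have h1 : Fp ψ t p = ∫ y : ℝ, ∫ u : ℝ, Kf ψ t p (y, u) := by
    rw [Fp]
    congr 1
    funext y
    rw [G_alt, ← integral_mul_const]
    rfl
  have hswap : (∫ y : ℝ, ∫ u : ℝ, Kf ψ t p (y, u)) = ∫ u : ℝ, ∫ y : ℝ, Kf ψ t p (y, u) := by
    apply integral_integral_swap
    have h := K_int ψ t p
    rw [Measure.volume_eq_prod] at h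
    exact h
  rw [h1, hswap]
  calc (∫ u : ℝ, ∫ y : ℝ, Kf ψ t p (y, u))
      = ∫ u : ℝ, ((starRingEnd ℂ) (ψ u) * ec ((p - t / 2) * u)) * A ψ (p + t / 2) := by
        congr 1; funext u; exact inner_y ψ t p u
    _ = (∫ u : ℝ, (starRingEnd ℂ) (ψ u) * ec ((p - t / 2) * u)) * A ψ (p + t / 2) :=
        integral_mul_const _ _
    _ = _ := by rw [A_conj]

lemma F_cont : Continuous (Fp ψ t) := by
  have h : Fp ψ t = fun p : ℝ => (starRingEnd ℂ) (A ψ (p - t / 2)) * A ψ (p + t / 2) :=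
    funext fun p => stepC ψ t p
  rw [h]
  exact (conj_cont ((A_cont ψ).comp (continuous_id.sub continuous_const))).mul
    ((A_cont ψ).comp (continuous_id.add continuous_const))

lemma F_int : Integrable (Fp ψ t) := by
  have hg : Integrable (fun p : ℝ => Cψ (fourierTransformCLM ℂ ψ) * ‖A ψ (p + t / 2)‖) :=
    (((A_int ψ).norm.comp_add_right (t / 2))).const_mul _
  refine hg.mono' (F_cont ψ t).aestronglyMeasurable (Filter.Eventually.of_forall fun p => ?_)
  rw [stepC, norm_mul, RCLike.norm_conj]
  exact mul_le_mul_of_nonneg_right (A_bound ψ _) (norm_nonneg _)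

lemma bullet2 : Integrable (fun p : ℝ =>
    ∫ x : ℝ, Complex.exp (-Complex.I * ((s * p + t * x : ℝ) : ℂ)) * WV ψ x p) := by
  have hg : Integrable (fun p : ℝ => (2 * Real.pi) ^ (-(1 / 2) : ℝ) * ‖Fp ψ t p‖) :=
    (F_int ψ t).norm.const_mul _
  refine hg.mono' ?_ (Filter.Eventually.of_forall fun p => ?_)
  · have h : (fun p : ℝ =>
        ∫ x : ℝ, Complex.exp (-Complex.I * ((s * p + t * x : ℝ) : ℂ)) * WV ψ x p)
        = fun p : ℝ => (((2 * Real.pi) ^ (-(1 / 2) : ℝ) : ℝ) : ℂ) * ec (-(s * p)) * Fp ψ t p :=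
      funext fun p => stepA ψ s t p
    rw [h]
    apply Continuous.aestronglyMeasurable
    exact ((continuous_const.mul (ec_continuous.comp (by fun_prop))).mul (F_cont ψ t))
  · rw [stepA, norm_mul, norm_mul, Complex.norm_real, ec_norm, mul_one, Real.norm_eq_abs,
      _root_.abs_of_nonneg c_nonneg]

/- Fourier inversion step. -/

lemma FG_eq (ξ : ℝ) : 𝓕 (G ψ t) ξ = Fp ψ t (-(2 * π) * ξ) := by
  rw [Real.fourier_real_eq, Fp]
  congr 1
  funext y
  rw [Circle.smul_def, Real.fourierChar_apply, smul_eq_mul, mul_comm _ (G ψ t y)]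
  congr 1
  rw [ec_apply]
  congr 1
  push_cast
  ring

lemma FG_int : Integrable (𝓕 (G ψ t)) := by
  have h : 𝓕 (G ψ t) = fun ξ : ℝ => Fp ψ t (-(2 * π) * ξ) := funext fun ξ => FG_eq ψ t ξ
  rw [h]
  exact (F_int ψ t).comp_mul_left' (by simpa using two_pi_ne)

lemma inversion :
    (∫ p : ℝ, ec (-(s * p)) * Fp ψ t p) = ((2 * π : ℝ) : ℂ) * G ψ t s := by
  have hinv : 𝓕⁻ (𝓕 (G ψ t)) s = G ψ t s :=
    (G_integrable ψ t).fourierInv_fourier_eq (FG_int ψ t) (G_cont ψ t).continuousAt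
  have hsub := Measure.integral_comp_mul_left
    (fun p : ℝ => ec (-(s * p)) * Fp ψ t p) (-(2 * π))
  -- hsub : ∫ ξ, ec (-(s * (-(2π) * ξ))) * Fp (-(2π) * ξ) = |(-(2π))⁻¹| • ∫ p, ec (-(s*p)) * Fp p
  have hL : (∫ ξ : ℝ, ec (-(s * (-(2 * π) * ξ))) * Fp ψ t (-(2 * π) * ξ)) = G ψ t s := by
    rw [← hinv, Real.fourierInv_eq_fourier_neg, Real.fourier_real_eq]
    congr 1
    funext ξ
    rw [Circle.smul_def, Real.fourierChar_apply, FG_eq, smul_eq_mul]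
    congr 1
    rw [ec_apply]
    congr 1
    push_cast
    ring
  rw [hL] at hsub
  have habs : |(-(2 * π) : ℝ)⁻¹| = (2 * π)⁻¹ := by
    rw [abs_inv, abs_neg, abs_of_pos (by positivity)]
  rw [habs] at hsub
  rw [hsub, Complex.real_smul, ← mul_assoc, ← Complex.ofReal_mul,
    mul_inv_cancel₀ (two_pi_ne), Complex.ofReal_one, one_mul]

lemma bullet3 : Integrable (fun x : ℝ =>
    Complex.exp (-Complex.I * ((t * x : ℝ) : ℂ)) *
      (starRingEnd ℂ) (ψ (x + s / 2)) * ψ (x - s / 2)) := by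
  have hg : Integrable (fun x : ℝ => Cψ ψ * ‖ψ (x - s / 2)‖) :=
    ((ψ.integrable.norm.comp_sub_right (s / 2))).const_mul _
  refine hg.mono' ?_ (Filter.Eventually.of_forall fun x => ?_)
  · apply Continuous.aestronglyMeasurable
    apply Continuous.mul
    · apply Continuous.mul
      · fun_prop
      · fun_prop
    · fun_prop
  · rw [norm_mul, norm_mul]
    have h1 : ‖Complex.exp (-Complex.I * ((t * x : ℝ) : ℂ))‖ = 1 := by
      rw [ec_neg_ofReal, ec_norm]
    rw [h1, one_mul, RCLike.norm_conj]
    exact mul_le_mul_of_nonneg_right (norm_le_Cψ ψ _) (norm_nonneg _)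

lemma G_s_eq : G ψ t s = ∫ x : ℝ, Complex.exp (-Complex.I * ((t * x : ℝ) : ℂ)) *
    (starRingEnd ℂ) (ψ (x + s / 2)) * ψ (x - s / 2) := by
  rw [G]
  congr 1
  funext x
  rw [ec_neg_ofReal]
  ring

end WVAux

open WVAux in
/-- The Fourier transform of the Wigner–Ville distribution equals the `α = 0`
hashed expression `⟨e^{isp̂/2}ψ, e^{-itx̂} e^{-isp̂/2}ψ⟩` of the canonical pair;
all integrals involved are absolutely convergent. -/
theorem stmt_13 (ψ : SchwartzMap ℝ ℂ) (s t : ℝ) :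
    (∀ p : ℝ, Integrable fun x : ℝ =>
        Complex.exp (-Complex.I * ((s * p + t * x : ℝ) : ℂ)) * WV ψ x p) ∧
    Integrable (fun p : ℝ =>
        ∫ x : ℝ, Complex.exp (-Complex.I * ((s * p + t * x : ℝ) : ℂ)) * WV ψ x p) ∧
    Integrable (fun x : ℝ =>
        Complex.exp (-Complex.I * ((t * x : ℝ) : ℂ)) *
          (starRingEnd ℂ) (ψ (x + s / 2)) * ψ (x - s / 2)) ∧
    ((((2 * Real.pi)⁻¹ : ℝ)) : ℂ) *
        (∫ p : ℝ, ∫ x : ℝ, Complex.exp (-Complex.I * ((s * p + t * x : ℝ) : ℂ)) * WV ψ x p)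
      = (((2 * Real.pi) ^ (-(1 / 2) : ℝ) : ℝ) : ℂ) *
          ∫ x : ℝ, Complex.exp (-Complex.I * ((t * x : ℝ) : ℂ)) *
            (starRingEnd ℂ) (ψ (x + s / 2)) * ψ (x - s / 2) := by
  refine ⟨bullet1 ψ s t, bullet2 ψ s t, bullet3 ψ s t, ?_⟩
  have h1 : (∫ p : ℝ, ∫ x : ℝ,
      Complex.exp (-Complex.I * ((s * p + t * x : ℝ) : ℂ)) * WV ψ x p)
      = (((2 * Real.pi) ^ (-(1 / 2) : ℝ) : ℝ) : ℂ) * (∫ p : ℝ, ec (-(s * p)) * Fp ψ t p) := by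
    rw [← integral_const_mul]
    congr 1
    funext p
    rw [stepA ψ s t p]
    ring
  rw [h1, inversion ψ s t, G_s_eq ψ s t]
  rw [← mul_assoc, ← mul_assoc]
  congr 1
  rw [← Complex.ofReal_mul, ← Complex.ofReal_mul]
  congr 1
  rw [mul_comm ((2 * Real.pi)⁻¹) _, mul_assoc, inv_mul_cancel₀ (two_pi_ne), mul_one]
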